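/- Let V be a Hilbert space and W, Z closed linear subspaces with V = W ⊕ Z (internal direct sum, i.e. W + Z = V and W ∩ Z = {0}). Then the operator norm of the composition of orthogonal projections Π_W ∘ Π_Z satisfies ‖Π_W Π_Z‖ ≤ c for some constant 0 ≤ c < 1. -/

import Mathlib

open RealInnerProductSpace

theorem stmt_0 {V : Type*} [NormedAddCommGroup V] [InnerProductSpace ℝ V] [CompleteSpace V]
    (W Z : Submodule ℝ V) [CompleteSpace W] [CompleteSpace Z]
    (hsum : W ⊔ Z = ⊤) (hinter : W ⊓ Z = ⊥) :
    ∃ c : ℝ, 0 ≤ c ∧ c < 1 ∧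
      ‖(W.subtypeL.comp W.orthogonalProjectionOnto).comp
        (Z.subtypeL.comp Z.orthogonalProjectionOnto)‖ ≤ c := by
  rcases eq_or_ne Z ⊥ with rfl | hZ
  · refine ⟨0, le_refl 0, one_pos, ?_⟩
    have : (W.subtypeL.comp W.orthogonalProjectionOnto).comp
        ((⊥ : Submodule ℝ V).subtypeL.comp (⊥ : Submodule ℝ V).orthogonalProjectionOnto) = 0 := by
      ext v
      simp
    rw [this]
    simp
  · have hcompl : IsCompl W Z := ⟨disjoint_iff.2 hinter, codisjoint_iff.2 hsum⟩
    have hWc : IsClosed (W : Set V) := (completeSpace_coe_iff_isComplete.1 ‹_›).isClosed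
    have hZc : IsClosed (Z : Set V) := (completeSpace_coe_iff_isComplete.1 ‹_›).isClosed
    set P : V →L[ℝ] V :=
      Z.subtypeL.comp (Z.linearProjOfClosedCompl W hcompl.symm hZc hWc) with hP
    have hPz : ∀ z ∈ Z, P z = z := by
      intro z hz
      simp [hP, Submodule.coe_continuous_linearProjOfClosedCompl', Submodule.projectionOnto_apply_left hcompl.symm ⟨z, hz⟩]
    have hPw : ∀ w ∈ W, P w = 0 := by
      intro w hw
      simp [hP, Submodule.coe_continuous_linearProjOfClosedCompl', Submodule.projectionOnto_apply_of_mem_right hcompl.symm hw]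
    set N := ‖P‖ with hN
    have hN1 : 1 ≤ N := by
      obtain ⟨z, hzZ, hz0⟩ := Submodule.exists_mem_ne_zero_of_ne_bot hZ
      have h1 : ‖z‖ ≤ N * ‖z‖ := by
        calc ‖z‖ = ‖P z‖ := by rw [hPz z hzZ]
        _ ≤ N * ‖z‖ := P.le_opNorm z
      have hz : 0 < ‖z‖ := norm_pos_iff.2 hz0
      nlinarith
    have hN0 : 0 < N := lt_of_lt_of_le one_pos hN1
    set c := Real.sqrt (1 - 1 / N ^ 2) with hc
    have harg0 : 0 ≤ 1 - 1 / N ^ 2 := by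
      have : 1 / N ^ 2 ≤ 1 := by
        rw [div_le_one (by positivity)]
        nlinarith
      linarith
    have harg1 : 1 - 1 / N ^ 2 < 1 := by
      have : 0 < 1 / N ^ 2 := by positivity
      linarith
    refine ⟨c, Real.sqrt_nonneg _, (Real.sqrt_lt' one_pos).2 (by linarith), ?_⟩
    apply ContinuousLinearMap.opNorm_le_bound _ (Real.sqrt_nonneg _)
    intro v
    set z : V := (Z.orthogonalProjectionOnto v : V) with hzdef
    have hzZ : z ∈ Z := (Z.orthogonalProjectionOnto v).2
    set w : V := (W.orthogonalProjectionOnto z : V) with hwdef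
    have hwW : w ∈ W := (W.orthogonalProjectionOnto z).2
    -- Pythagoras: ‖z‖² = ‖w‖² + ‖z - w‖²
    have hperp : (inner ℝ w (z - w) : ℝ) = 0 := by
      have := Submodule.starProjection_inner_eq_zero z w hwW
      rw [real_inner_comm] at this
      exact this
    have hpyth : ‖z‖ ^ 2 = ‖w‖ ^ 2 + ‖z - w‖ ^ 2 := by
      have h := norm_add_sq_real w (z - w)
      rw [hperp] at h
      have hzw : w + (z - w) = z := by abel
      rw [hzw] at h
      linarith
    -- ‖z‖ ≤ N * ‖z - w‖
    have hkey : ‖z‖ ≤ N * ‖z - w‖ := by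
      have : P (z - w) = z := by
        rw [map_sub, hPz z hzZ, hPw w hwW, sub_zero]
      calc ‖z‖ = ‖P (z - w)‖ := by rw [this]
      _ ≤ N * ‖z - w‖ := P.le_opNorm _
    -- so ‖w‖² ≤ (1 - 1/N²) ‖z‖²
    have hw2 : ‖w‖ ^ 2 ≤ (1 - 1 / N ^ 2) * ‖z‖ ^ 2 := by
      have h1 : ‖z‖ ^ 2 / N ^ 2 ≤ ‖z - w‖ ^ 2 := by
        rw [div_le_iff₀ (by positivity)]
        nlinarith [norm_nonneg z, norm_nonneg (z - w)]
      have h2 : ‖w‖ ^ 2 = ‖z‖ ^ 2 - ‖z - w‖ ^ 2 := by linarith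
      rw [h2]
      have : ‖z‖ ^ 2 / N ^ 2 = 1 / N ^ 2 * ‖z‖ ^ 2 := by ring
      nlinarith
    have hwle : ‖w‖ ≤ c * ‖z‖ := by
      have hcz : 0 ≤ c * ‖z‖ := mul_nonneg (Real.sqrt_nonneg _) (norm_nonneg _)
      have hsq : ‖w‖ ^ 2 ≤ (c * ‖z‖) ^ 2 := by
        have : (c * ‖z‖) ^ 2 = (1 - 1 / N ^ 2) * ‖z‖ ^ 2 := by
          rw [mul_pow, hc, Real.sq_sqrt harg0]
        rw [this]; exact hw2
      calc ‖w‖ = Real.sqrt (‖w‖ ^ 2) := (Real.sqrt_sq (norm_nonneg w)).symm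
      _ ≤ Real.sqrt ((c * ‖z‖) ^ 2) := Real.sqrt_le_sqrt hsq
      _ = c * ‖z‖ := Real.sqrt_sq hcz
    have hzv : ‖z‖ ≤ ‖v‖ := by
      have h1 : ‖Z.orthogonalProjectionOnto v‖ ≤ ‖Z.orthogonalProjectionOnto‖ * ‖v‖ :=
        Z.orthogonalProjectionOnto.le_opNorm v
      have h2 : ‖Z.orthogonalProjectionOnto‖ ≤ 1 := Submodule.orthogonalProjectionOnto_norm_le Z
      have h3 : ‖z‖ = ‖Z.orthogonalProjectionOnto v‖ := rfl
      nlinarith [norm_nonneg v]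
    have happ : ((W.subtypeL.comp W.orthogonalProjectionOnto).comp
        (Z.subtypeL.comp Z.orthogonalProjectionOnto)) v = w := by
      simp [hwdef, hzdef]
    rw [happ]
    calc ‖w‖ ≤ c * ‖z‖ := hwle
    _ ≤ c * ‖v‖ := by
      exact mul_le_mul_of_nonneg_left hzv (Real.sqrt_nonneg _)
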